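/- For all natural numbers a, b ≥ 1, gcd(a,b) = ⌊(2^(a²b(b+1)) − 2^(a²b))·(2^(a²b²) − 1) / ((2^(a²b) − 1)(2^(ab²) − 1)·2^(a²b²))⌋ mod 2^(ab). -/

import Mathlib

open Finset


lemma geom_aux (x : ℕ) (hx : 1 ≤ x) : ∀ n, x ^ n = (x - 1) * ∑ i ∈ range n, x ^ i + 1 := by
  obtain ⟨y, rfl⟩ : ∃ y, x = y + 1 := ⟨x - 1, (Nat.succ_pred_eq_of_pos hx).symm⟩
  intro n
  induction n with
  | zero => simp
  | succ n ih =>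
    simp only [Nat.add_sub_cancel] at ih ⊢
    rw [sum_range_succ, Nat.mul_add, pow_succ, ih]
    ring

lemma geom_sub (x m n : ℕ) (hx : 1 ≤ x) :
    x ^ (m * n) - 1 = (x ^ m - 1) * ∑ i ∈ range n, x ^ (m * i) := by
  have h := geom_aux (x ^ m) (Nat.one_le_pow _ _ hx) n
  simp only [pow_mul]
  omega


lemma card_eq_gcd (a b : ℕ) (ha : 1 ≤ a) (hb : 1 ≤ b) :
    ((range b ×ˢ range a).filter (fun p => a * (p.1 + 1) + b * p.2 = a * b)).card
      = Nat.gcd a b := by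
  set g := Nat.gcd a b with hg
  have hg1 : 1 ≤ g := Nat.gcd_pos_of_pos_left _ ha
  set a' := a / g with ha'
  set b' := b / g with hb'
  have haa : a = g * a' := (Nat.div_mul_cancel (Nat.gcd_dvd_left a b)).symm.trans (mul_comm _ _)
  have hbb : b = g * b' := (Nat.div_mul_cancel (Nat.gcd_dvd_right a b)).symm.trans (mul_comm _ _)
  have ha1 : 1 ≤ a' := Nat.div_pos (Nat.le_of_dvd ha (Nat.gcd_dvd_left a b)) hg1
  have hb1 : 1 ≤ b' := Nat.div_pos (Nat.le_of_dvd hb (Nat.gcd_dvd_right a b)) hg1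
  have hcop : Nat.Coprime a' b' := Nat.coprime_div_gcd_div_gcd hg1
  have hab' : a * b' = b * a' := by rw [haa, hbb]; ring
  have hag : a' * g = a := by rw [haa]; ring
  have hbg : b' * g = b := by rw [hbb]; ring
  symm
  rw [← Finset.card_range g]
  apply Finset.card_bij (fun s _ => ((b' * (s + 1) - 1, a - a' * (s + 1)) : ℕ × ℕ))
  · intro s hs
    rw [Finset.mem_range] at hs
    have h1 : b' * (s + 1) ≤ b' * g := Nat.mul_le_mul_left _ (by omega)
    have h2 : a' * (s + 1) ≤ a' * g := Nat.mul_le_mul_left _ (by omega)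
    have h3 : 1 ≤ b' * (s + 1) := Nat.one_le_iff_ne_zero.mpr (by positivity)
    have h4 : 1 ≤ a' * (s + 1) := Nat.one_le_iff_ne_zero.mpr (by positivity)
    simp only [Finset.mem_filter, Finset.mem_product, Finset.mem_range]
    refine ⟨⟨by omega, by omega⟩, ?_⟩
    have e1 : b' * (s + 1) - 1 + 1 = b' * (s + 1) := by omega
    rw [e1]
    have e2 : a * (b' * (s + 1)) = b * (a' * (s + 1)) := by
      rw [← mul_assoc, ← mul_assoc, hab']
    have e3 : b * (a - a' * (s + 1)) = b * a - b * (a' * (s + 1)) := Nat.mul_sub _ _ _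
    have e4 : b * (a' * (s + 1)) ≤ b * a := Nat.mul_le_mul_left _ (by omega)
    have e5 : b * a = a * b := mul_comm _ _
    omega
  · intro s hs t ht h
    have h1 := congrArg Prod.fst h
    dsimp only at h1
    have h3 : 1 ≤ b' * (s + 1) := Nat.one_le_iff_ne_zero.mpr (by positivity)
    have h4 : 1 ≤ b' * (t + 1) := Nat.one_le_iff_ne_zero.mpr (by positivity)
    have h5 : b' * (s + 1) = b' * (t + 1) := by omega
    have := Nat.eq_of_mul_eq_mul_left (by omega : 0 < b') h5
    omega
  · rintro ⟨k, j⟩ hp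
    simp only [Finset.mem_filter, Finset.mem_product, Finset.mem_range] at hp
    obtain ⟨⟨hk, hj⟩, heq⟩ := hp
    have hble : b * j ≤ b * a := Nat.mul_le_mul_left _ (by omega)
    have h6 : a * (k + 1) = b * (a - j) := by
      have e3 : b * (a - j) = b * a - b * j := Nat.mul_sub _ _ _
      have e5 : b * a = a * b := mul_comm _ _
      omega
    have h7 : a' * (k + 1) = b' * (a - j) := by
      apply Nat.eq_of_mul_eq_mul_left (show 0 < g by omega)
      calc g * (a' * (k + 1)) = a * (k + 1) := by rw [haa]; ring
      _ = b * (a - j) := h6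
      _ = g * (b' * (a - j)) := by rw [hbb]; ring
    have hdvd : b' ∣ k + 1 := by
      have hd : b' ∣ (k + 1) * a' := ⟨a - j, by rw [mul_comm (k+1) a', h7]⟩
      exact Nat.Coprime.dvd_of_dvd_mul_right hcop.symm hd
    obtain ⟨m, hm⟩ := hdvd
    have hm1 : 1 ≤ m := Nat.pos_of_ne_zero fun h => by subst h; simp at hm
    have hmg : m ≤ g := by
      have hh : b' * m ≤ b' * g := by rw [← hm]; omega
      exact Nat.le_of_mul_le_mul_left hh (by omega)
    refine ⟨m - 1, Finset.mem_range.mpr (by omega), ?_⟩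
    have hms : m - 1 + 1 = m := by omega
    rw [hms]
    have h8 : a' * m = a - j := by
      apply Nat.eq_of_mul_eq_mul_left (show 0 < b' by omega)
      calc b' * (a' * m) = a' * (b' * m) := by ring
      _ = a' * (k + 1) := by rw [← hm]
      _ = b' * (a - j) := h7
    have h9 : a' * m ≤ a' * g := Nat.mul_le_mul_left _ hmg
    have h10 : 1 ≤ b' * m := Nat.one_le_iff_ne_zero.mpr (by positivity)
    have : b' * m = k + 1 := hm.symm
    ext
    · dsimp only; omega
    · dsimp only; omega

lemma mazzanti_key (a b x : ℕ) (ha : 1 ≤ a) (hb : 1 ≤ b) (hx : a * b < x) :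
    ((x ^ (a * b + a) - x ^ a) * (x ^ (a * b) - 1)) /
        ((x ^ a - 1) * (x ^ b - 1) * x ^ (a * b)) % x = Nat.gcd a b := by
  have hx1 : 1 ≤ x := by omega
  have hx2 : 2 ≤ x := by nlinarith
  set P : Finset (ℕ × ℕ) := range b ×ˢ range a with hP
  set e : ℕ × ℕ → ℕ := fun p => a * (p.1 + 1) + b * p.2 with he
  set S : ℕ := ∑ p ∈ P, x ^ e p with hS
  -- Step 1 : numerator = D * S
  have hGb := geom_sub x a b hx1
  have hGa := geom_sub x b a hx1
  have hab : x ^ (a * b + a) - x ^ a = x ^ a * (x ^ (a * b) - 1) := by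
    rw [pow_add, Nat.mul_sub, mul_one, mul_comm]
  have hSfact : S = x ^ a * ((∑ i ∈ range b, x ^ (a * i)) * ∑ j ∈ range a, x ^ (b * j)) := by
    calc S = ∑ k ∈ range b, ∑ j ∈ range a, x ^ (a * (k + 1) + b * j) := by
          rw [hS, hP, Finset.sum_product]
      _ = ∑ k ∈ range b, (x ^ a * x ^ (a * k)) * ∑ j ∈ range a, x ^ (b * j) := by
          refine Finset.sum_congr rfl fun k _ => ?_
          rw [Finset.mul_sum]
          refine Finset.sum_congr rfl fun j _ => ?_
          rw [← pow_add, ← pow_add]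
          congr 1
          ring
      _ = x ^ a * ((∑ i ∈ range b, x ^ (a * i)) * ∑ j ∈ range a, x ^ (b * j)) := by
          rw [← Finset.sum_mul, ← Finset.mul_sum, mul_assoc]
  have hnum : (x ^ (a * b + a) - x ^ a) * (x ^ (a * b) - 1)
      = ((x ^ a - 1) * (x ^ b - 1)) * S := by
    rw [hab, hSfact]
    calc x ^ a * (x ^ (a * b) - 1) * (x ^ (a * b) - 1)
        = x ^ a * ((x ^ (a * b) - 1) * (x ^ (a * b) - 1)) := by ring
      _ = x ^ a * (((x ^ a - 1) * ∑ i ∈ range b, x ^ (a * i)) *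
            ((x ^ b - 1) * ∑ j ∈ range a, x ^ (b * j))) := by
          rw [← hGb, ← geom_sub x b a hx1, mul_comm b a]
      _ = _ := by ring
  -- Step 2 : divide out D
  have hD : 0 < (x ^ a - 1) * (x ^ b - 1) := by
    have h1 : 2 ≤ x ^ a := le_trans hx2 (Nat.le_self_pow (by omega) x)
    have h2 : 2 ≤ x ^ b := le_trans hx2 (Nat.le_self_pow (by omega) x)
    apply Nat.mul_pos <;> omega
  have hdiv : (x ^ (a * b + a) - x ^ a) * (x ^ (a * b) - 1) /
      ((x ^ a - 1) * (x ^ b - 1) * x ^ (a * b)) = S / x ^ (a * b) := by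
    rw [hnum]
    exact Nat.mul_div_mul_left _ _ hD
  rw [hdiv]
  -- Step 3 : compute S / x^(a*b) % x
  have hsplit := Finset.sum_filter_add_sum_filter_not P (fun p => a * b ≤ e p) (fun p => x ^ e p)
  set Pge := P.filter (fun p => a * b ≤ e p) with hPge
  set Plt := P.filter (fun p => ¬ a * b ≤ e p) with hPlt
  set A : ℕ := ∑ p ∈ Pge, x ^ (e p - a * b) with hA
  have hge : ∑ p ∈ Pge, x ^ e p = x ^ (a * b) * A := by
    rw [hA, Finset.mul_sum]
    apply Finset.sum_congr rfl
    intro p hp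
    rw [hPge, Finset.mem_filter] at hp
    rw [← pow_add]
    congr 1
    omega
  have hcardP : P.card = a * b := by rw [hP]; simp [Finset.card_product, mul_comm]
  have hlt : ∑ p ∈ Plt, x ^ e p < x ^ (a * b) := by
    have hone : 1 ≤ a * b := Nat.mul_pos (by omega) (by omega)
    calc ∑ p ∈ Plt, x ^ e p ≤ ∑ p ∈ Plt, x ^ (a * b - 1) := by
          apply Finset.sum_le_sum
          intro p hp
          rw [hPlt, Finset.mem_filter] at hp
          exact Nat.pow_le_pow_right hx1 (by omega)
      _ = Plt.card * x ^ (a * b - 1) := by rw [Finset.sum_const, smul_eq_mul]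
      _ ≤ (a * b) * x ^ (a * b - 1) := by
          apply Nat.mul_le_mul_right
          calc Plt.card ≤ P.card := Finset.card_le_card (Finset.filter_subset _ _)
            _ = a * b := hcardP
      _ < x * x ^ (a * b - 1) := by
          exact (Nat.mul_lt_mul_right (Nat.pow_pos (by omega))).mpr (by omega)
      _ = x ^ (a * b) := by rw [← pow_succ']; congr 1; omega
  have hSdiv : S / x ^ (a * b) = A := by
    have : S = x ^ (a * b) * A + ∑ p ∈ Plt, x ^ e p := by rw [← hge, hsplit]
    rw [this, Nat.mul_add_div (Nat.pow_pos (by omega)),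
      Nat.div_eq_of_lt hlt, add_zero]
  rw [hSdiv]
  -- Step 4 : A % x = card of exact solutions
  have hsplit2 := Finset.sum_filter_add_sum_filter_not Pge (fun p => e p = a * b)
    (fun p => x ^ (e p - a * b))
  set Peq := Pge.filter (fun p => e p = a * b) with hPeq
  set Pgt := Pge.filter (fun p => ¬ e p = a * b) with hPgt
  have heqsum : ∑ p ∈ Peq, x ^ (e p - a * b) = Peq.card := by
    rw [Finset.sum_congr rfl (fun p hp => ?_), Finset.sum_const, smul_eq_mul, mul_one]
    rw [hPeq, Finset.mem_filter] at hp
    rw [hp.2, Nat.sub_self, pow_zero]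
  have hgtdvd : x ∣ ∑ p ∈ Pgt, x ^ (e p - a * b) := by
    apply Finset.dvd_sum
    intro p hp
    rw [hPgt, Finset.mem_filter, hPge, Finset.mem_filter] at hp
    exact dvd_pow_self x (by omega)
  obtain ⟨t, ht⟩ := hgtdvd
  have hAval : A = Peq.card + x * t := by rw [hA, ← hsplit2, heqsum, ht]
  have hPeqcard : Peq.card < x := by
    have hsub : Peq ⊆ P := Finset.Subset.trans (Finset.filter_subset _ _) (Finset.filter_subset _ _)
    have := Finset.card_le_card hsub
    omega
  rw [hAval, Nat.add_mul_mod_self_left, Nat.mod_eq_of_lt hPeqcard]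
  -- Step 5 : count solutions
  have hPeq' : Peq = P.filter (fun p => a * (p.1 + 1) + b * p.2 = a * b) := by
    rw [hPeq, hPge, Finset.filter_filter]
    apply Finset.filter_congr
    intro p _
    constructor
    · rintro ⟨_, h⟩; exact h
    · intro h; exact ⟨le_of_eq h.symm, h⟩
  rw [hPeq', hP]
  exact card_eq_gcd a b ha hb

theorem mazzanti_gcd (a b : ℕ) (ha : 1 ≤ a) (hb : 1 ≤ b) :
    Nat.gcd a b =
      ((2 ^ (a ^ 2 * b * (b + 1)) - 2 ^ (a ^ 2 * b)) * (2 ^ (a ^ 2 * b ^ 2) - 1) /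
          ((2 ^ (a ^ 2 * b) - 1) * (2 ^ (a * b ^ 2) - 1) * 2 ^ (a ^ 2 * b ^ 2)))
        % 2 ^ (a * b) := by
  have h1 : 2 ^ (a ^ 2 * b * (b + 1)) = (2 ^ (a * b)) ^ (a * b + a) := by
    rw [← pow_mul]; congr 1; ring
  have h2 : 2 ^ (a ^ 2 * b) = (2 ^ (a * b)) ^ a := by
    rw [← pow_mul]; congr 1; ring
  have h3 : 2 ^ (a ^ 2 * b ^ 2) = (2 ^ (a * b)) ^ (a * b) := by
    rw [← pow_mul]; congr 1; ring
  have h4 : 2 ^ (a * b ^ 2) = (2 ^ (a * b)) ^ b := by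
    rw [← pow_mul]; congr 1; ring
  rw [h1, h2, h3, h4]
  exact (mazzanti_key a b (2 ^ (a * b)) ha hb Nat.lt_two_pow_self).symm
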